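/- For all natural numbers n, k, q with 1 ≤ k ≤ n and 1 ≤ q ≤ n, there exists a family F of functions from {1, …, n} to {1, …, q} with |F| ≤ C(n, q − 1) (the binomial coefficient n choose q−1) such that for every set S ⊆ {1, …, n} with |S| = k there is a function f ∈ F that splits S evenly, i.e., for all z, z′ ∈ {1, …, q}, the values |f⁻¹(z) ∩ S| and |f⁻¹(z′) ∩ S| differ by at most 1. -/

import Mathlib

open Finset

/-- The splitting function determined by a set `B` of breakpoints:
`x` gets colour `|{b ∈ B : b ≤ x}|` (capped at `q-1`). -/
private def splitFun (n q : ℕ) (hq : 1 ≤ q) (B : Finset (Fin n)) (x : Fin n) : Fin q :=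
  ⟨min ((B.filter (fun b => b ≤ x)).card) (q - 1), by
    have := Nat.min_le_right ((B.filter (fun b => b ≤ x)).card) (q - 1); omega⟩

private lemma splitFun_val {n q : ℕ} (hq : 1 ≤ q) (B : Finset (Fin n))
    (hB : B.card = q - 1) (x : Fin n) :
    (splitFun n q hq B x).val = (B.filter (fun b => b ≤ x)).card := by
  have h : (B.filter (fun b => b ≤ x)).card ≤ q - 1 :=
    le_trans (Finset.card_le_card (Finset.filter_subset _ _)) hB.le
  simp [splitFun, Nat.min_eq_left h]

/-- Threshold function: `T k q c` is the prefix-sum of balanced block sizes. -/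
private def Thr (k q c : ℕ) : ℕ := if q ≤ c then k else c * k / q

private lemma div_step (k q c : ℕ) (hq0 : 0 < q) :
    c*k/q + k/q ≤ (c+1)*k/q ∧ (c+1)*k/q ≤ c*k/q + k/q + 1 := by
  have hmul : (c+1) * k = c * k + k := by ring
  have key : (c*k + k) / q = c*k/q + k/q + if q ≤ c*k % q + k % q then 1 else 0 :=
    Nat.add_div hq0
  rw [hmul, key]
  constructor <;> (split <;> omega)

private lemma Thr_bounds (k q : ℕ) (hq : 1 ≤ q) (c : ℕ) (hc : c < q) :
    k / q ≤ Thr k q (c+1) - Thr k q c ∧ Thr k q (c+1) - Thr k q c ≤ k / q + 1 ∧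
      Thr k q c ≤ Thr k q (c+1) ∧ Thr k q (c+1) ≤ k := by
  have hq0 : 0 < q := hq
  obtain ⟨hlo, hhi⟩ := div_step k q c hq0
  have hTc : Thr k q c = c * k / q := if_neg (Nat.not_le.mpr hc)
  by_cases h1 : c + 1 < q
  · have hT1 : Thr k q (c+1) = (c+1)*k/q := if_neg (Nat.not_le.mpr h1)
    have hle : (c+1)*k/q ≤ k := by
      calc (c+1)*k/q ≤ q*k/q := Nat.div_le_div_right (Nat.mul_le_mul_right k h1.le)
      _ = k := Nat.mul_div_cancel_left k hq0
    rw [hTc, hT1]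
    generalize hA : c*k/q = A at hlo hhi ⊢
    generalize hBv : (c+1)*k/q = B at hlo hhi hle ⊢
    generalize hm : k/q = m at hlo hhi ⊢
    omega
  · have hcq : c + 1 = q := by omega
    have hT1 : Thr k q (c+1) = k := if_pos (by omega)
    have hk : (c+1)*k/q = k := by rw [hcq, Nat.mul_div_cancel_left k hq0]
    rw [hTc, hT1]
    rw [hk] at hlo hhi
    generalize hA : c*k/q = A at hlo hhi ⊢
    generalize hm : k/q = m at hlo hhi ⊢
    omega

private lemma Thr_le_of_lt (k q : ℕ) (hq : 1 ≤ q) {c : ℕ} (hc : c ≤ q) : Thr k q c ≤ k := by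
  unfold Thr
  split
  · exact le_rfl
  · calc c * k / q ≤ q * k / q := Nat.div_le_div_right (Nat.mul_le_mul_right k hc)
    _ = k := Nat.mul_div_cancel_left k hq

/-- Cardinality of a filter of `Fin k` given by an interval condition. -/
private lemma card_filter_fin_interval (k a b : ℕ) (hb : b ≤ k) :
    (Finset.univ.filter fun j : Fin k => a ≤ (j:ℕ) ∧ (j:ℕ) < b).card = b - a := by
  rw [← Nat.card_Ico a b]
  refine Finset.card_bij (fun j _ => (j : ℕ)) ?_ ?_ ?_
  · intro j hj
    simp only [Finset.mem_filter] at hj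
    simp [Finset.mem_Ico, hj.2.1, hj.2.2]
  · intro j₁ _ j₂ _ h
    exact Fin.val_injective h
  · intro m hm
    simp only [Finset.mem_Ico] at hm
    refine ⟨⟨m, by omega⟩, ?_, rfl⟩
    simp [hm.1, hm.2]

/-- Counting in `S` via the order isomorphism with `Fin k`. -/
private lemma card_filter_via_orderIso {n k : ℕ} (S : Finset (Fin n)) (hS : S.card = k)
    (P : Fin n → Prop) [DecidablePred P] :
    (S.filter P).card =
      (Finset.univ.filter fun j : Fin k => P (S.orderIsoOfFin hS j : Fin n)).card := by
  symm
  refine Finset.card_bij (fun j _ => ((S.orderIsoOfFin hS) j : Fin n)) ?_ ?_ ?_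
  · intro j hj
    simp only [Finset.mem_filter] at hj ⊢
    exact ⟨((S.orderIsoOfFin hS) j).2, hj.2⟩
  · intro j₁ _ j₂ _ h
    exact (S.orderIsoOfFin hS).injective (Subtype.coe_injective h)
  · intro b hb
    simp only [Finset.mem_filter] at hb
    refine ⟨(S.orderIsoOfFin hS).symm ⟨b, hb.1⟩, ?_, ?_⟩
    · simp only [Finset.mem_filter, Finset.mem_univ, true_and,
        OrderIso.apply_symm_apply]
      exact hb.2
    · simp [OrderIso.apply_symm_apply]

/-- For all `1 ≤ k ≤ n` and `1 ≤ q ≤ n`, there is an `(n, k, q)`-splitter of size at most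
`n choose (q - 1)`: a family `F` of functions `Fin n → Fin q` such that every `k`-set
`S ⊆ Fin n` is split evenly by some `f ∈ F`, i.e. for all colours `z, z'`, the sizes
`|f⁻¹(z) ∩ S|` and `|f⁻¹(z') ∩ S|` differ by at most `1`. -/
theorem exists_splitter (n k q : ℕ) (hk1 : 1 ≤ k) (hkn : k ≤ n) (hq1 : 1 ≤ q) (hqn : q ≤ n) :
    ∃ F : Finset (Fin n → Fin q), F.card ≤ Nat.choose n (q - 1) ∧
      ∀ S : Finset (Fin n), S.card = k → ∃ f ∈ F, ∀ z z' : Fin q,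
        (S.filter fun x => f x = z).card ≤ (S.filter fun x => f x = z').card + 1 := by
  classical
  refine ⟨((Finset.univ : Finset (Fin n)).powersetCard (q - 1)).image (splitFun n q hq1),
    ?_, ?_⟩
  · calc _ ≤ ((Finset.univ : Finset (Fin n)).powersetCard (q - 1)).card :=
        Finset.card_image_le
    _ = Nat.choose n (q - 1) := by
        rw [Finset.card_powersetCard, Finset.card_univ, Fintype.card_fin]
  intro S hS
  by_cases hkq : k < q
  · -- small case: extend S to a breakpoint set of size q-1; each colour used ≤ 1 time
    obtain ⟨B, hSB, hBcard⟩ := Finset.exists_superset_card_eq (s := S) (n := q - 1)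
      (by omega) (by simp; omega)
    refine ⟨splitFun n q hq1 B, Finset.mem_image_of_mem _ (by
      simp [Finset.mem_powersetCard, hBcard]), ?_⟩
    intro z z'
    have hinj : ∀ x ∈ S, ∀ y ∈ S, splitFun n q hq1 B x = splitFun n q hq1 B y → x = y := by
      have hmono : ∀ x ∈ S, ∀ y ∈ S, x < y →
          (splitFun n q hq1 B x).val < (splitFun n q hq1 B y).val := by
        intro x hx y hy hxy
        rw [splitFun_val hq1 B hBcard, splitFun_val hq1 B hBcard]
        apply Finset.card_lt_card
        constructor
        · intro b hb
          simp only [Finset.mem_filter] at hb ⊢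
          exact ⟨hb.1, (lt_of_le_of_lt hb.2 hxy).le⟩
        · intro hsub
          have hy' : y ∈ B.filter (fun b => b ≤ y) := by
            simp only [Finset.mem_filter]
            exact ⟨hSB hy, le_rfl⟩
          have := hsub hy'
          simp only [Finset.mem_filter] at this
          exact absurd this.2 (not_le.mpr hxy)
      intro x hx y hy hxy
      rcases lt_trichotomy x y with h | h | h
      · exact absurd (congrArg Fin.val hxy) (Nat.ne_of_lt (hmono x hx y hy h))
      · exact h
      · exact absurd (congrArg Fin.val hxy).symm (Nat.ne_of_lt (hmono y hy x hx h))
    have hone : ∀ c : Fin q, (S.filter fun x => splitFun n q hq1 B x = c).card ≤ 1 := by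
      intro c
      apply Finset.card_le_one.mpr
      intro a ha b hb
      simp only [Finset.mem_filter] at ha hb
      exact hinj a ha.1 b hb.1 (ha.2.trans hb.2.symm)
    exact le_trans (hone z) (by omega)
  · -- main case: k ≥ q
    push_neg at hkq
    set e := S.orderIsoOfFin hS with he
    have htmem : ∀ z : ℕ, min (z * k / q) (k - 1) < k := by
      intro z
      have := Nat.min_le_right (z * k / q) (k - 1); omega
    set σ : ℕ → Fin n := fun z => (e ⟨min (z * k / q) (k - 1), htmem z⟩ : Fin n) with hσ
    have htle : ∀ z < q, z * k / q ≤ k - 1 := by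
      intro z hz
      have h1 : z * k ≤ (q - 1) * k := Nat.mul_le_mul_right k (by omega)
      have h2 : (q - 1) * k ≤ q * (k - 1) := by
        have : (q - 1) * k + k = q * k := by
          have : q - 1 + 1 = q := by omega
          calc (q-1) * k + k = (q - 1 + 1) * k := by ring
          _ = q * k := by rw [this]
        have hqk : q * (k-1) + q = q * k := by
          have hk' : k - 1 + 1 = k := by omega
          calc q * (k-1) + q = q * (k - 1 + 1) := by ring
          _ = q * k := by rw [hk']
        omega
      calc z * k / q ≤ q * (k - 1) / q := Nat.div_le_div_right (by omega)
      _ = k - 1 := Nat.mul_div_cancel_left _ (by omega)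
    have hmin : ∀ z < q, min (z * k / q) (k - 1) = z * k / q := fun z hz =>
      Nat.min_eq_left (htle z hz)
    have hmono : ∀ z z' : ℕ, z < z' → z' < q → z * k / q < z' * k / q := by
      intro z z' hzz hz'
      have hstep : z * k / q + k / q ≤ (z + 1) * k / q := by
        have := Nat.add_div (a := z * k) (b := k) (c := q) (by omega)
        have hm : (z+1) * k = z * k + k := by ring
        rw [hm, this]
        split <;> omega
      have hkq1 : 1 ≤ k / q := Nat.one_le_div_iff (by omega) |>.mpr hkq
      have h2 : (z+1) * k / q ≤ z' * k / q :=
        Nat.div_le_div_right (Nat.mul_le_mul_right k (by omega))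
      omega
    set B := (Finset.Ico 1 q).image σ with hB
    have hinjOn : Set.InjOn σ (Finset.Ico 1 q) := by
      intro a ha b hb hab
      simp only [Finset.coe_Ico, Set.mem_Ico] at ha hb
      have hab2 : (e ⟨min (a * k / q) (k - 1), htmem a⟩ : Fin n) =
          (e ⟨min (b * k / q) (k - 1), htmem b⟩ : Fin n) := hab
      have h1 : (⟨min (a * k / q) (k - 1), htmem a⟩ : Fin k) =
          ⟨min (b * k / q) (k - 1), htmem b⟩ :=
        e.injective (Subtype.coe_injective hab2)
      have hab3 : min (a * k / q) (k - 1) = min (b * k / q) (k - 1) :=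
        congrArg Fin.val h1
      rw [hmin a ha.2, hmin b hb.2] at hab3
      by_contra hne
      rcases Nat.lt_or_ge a b with h | h
      · exact absurd hab3 (Nat.ne_of_lt (hmono a b h hb.2))
      · exact absurd hab3.symm (Nat.ne_of_lt (hmono b a (by omega) ha.2))
    have hBcard : B.card = q - 1 := by
      rw [hB, Finset.card_image_of_injOn hinjOn, Nat.card_Ico]
    refine ⟨splitFun n q hq1 B, Finset.mem_image_of_mem _ (by
      simp [Finset.mem_powersetCard, hBcard]), ?_⟩
    -- compute the colour-class counts
    have hcount : ∀ c : Fin q,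
        (S.filter fun x => splitFun n q hq1 B x = c).card =
          Thr k q (c.val + 1) - Thr k q c.val := by
      intro c
      rw [card_filter_via_orderIso S hS]
      have hval : ∀ j : Fin k,
          (splitFun n q hq1 B (e j : Fin n)).val =
            ((Finset.Ico 1 q).filter fun z => z * k / q ≤ (j : ℕ)).card := by
        intro j
        rw [splitFun_val hq1 B hBcard]
        rw [hB, Finset.filter_image]
        rw [Finset.card_image_of_injOn (hinjOn.mono (by
          intro x hx
          simp only [Finset.coe_filter, Set.mem_setOf_eq] at hx
          simp only [Finset.coe_Ico, Set.mem_Ico]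
          exact Finset.mem_Ico.mp hx.1))]
        congr 1
        apply Finset.filter_congr
        intro z hz
        simp only [Finset.mem_Ico] at hz
        rw [hσ]
        simp only
        constructor
        · intro h
          have h2 : (⟨min (z * k / q) (k - 1), htmem z⟩ : Fin k) ≤ j :=
            e.le_iff_le.mp (Subtype.coe_le_coe.mp h)
          rw [Fin.le_def] at h2
          simp only [hmin z hz.2] at h2
          exact h2
        · intro h
          have h2 : (⟨min (z * k / q) (k - 1), htmem z⟩ : Fin k) ≤ j := by
            rw [Fin.le_def]
            simp only [hmin z hz.2]
            exact h
          exact Subtype.coe_le_coe.mpr ((e.le_iff_le).mpr h2)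
      -- characterize colour classes as intervals
      have hiff : ∀ j : Fin k, (splitFun n q hq1 B (e j : Fin n) = c ↔
          (Thr k q c.val ≤ (j : ℕ) ∧ (j : ℕ) < Thr k q (c.val + 1))) := by
        intro j
        rw [Fin.ext_iff, hval j]
        set F := (Finset.Ico 1 q).filter fun z => z * k / q ≤ (j : ℕ) with hF
        have hTc : Thr k q c.val = c.val * k / q := by
          simp [Thr, Nat.not_le.mpr c.isLt]
        constructor
        · intro hcard
          constructor
          · -- Thr c ≤ j
            rw [hTc]
            by_contra hcon
            push_neg at hcon
            have hc0 : 1 ≤ c.val := by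
              by_contra h0
              have : c.val = 0 := by omega
              rw [this] at hcon
              simp at hcon
            have hsub : F ⊆ Finset.Ico 1 c.val := by
              intro z hz
              rw [hF, Finset.mem_filter, Finset.mem_Ico] at hz
              rw [Finset.mem_Ico]
              refine ⟨hz.1.1, ?_⟩
              by_contra hge
              push_neg at hge
              have : c.val * k / q ≤ z * k / q :=
                Nat.div_le_div_right (Nat.mul_le_mul_right k hge)
              omega
            have := Finset.card_le_card hsub
            rw [hcard, Nat.card_Ico] at this
            omega
          · -- j < Thr (c+1)
            by_cases hcq : c.val + 1 < q
            · simp only [Thr, Nat.not_le.mpr hcq, if_false]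
              by_contra hcon
              push_neg at hcon
              have hsub : Finset.Ico 1 (c.val + 2) ⊆ F := by
                intro z hz
                rw [Finset.mem_Ico] at hz
                rw [hF, Finset.mem_filter, Finset.mem_Ico]
                refine ⟨⟨hz.1, by omega⟩, ?_⟩
                calc z * k / q ≤ (c.val + 1) * k / q :=
                  Nat.div_le_div_right (Nat.mul_le_mul_right k (by omega))
                _ ≤ (j : ℕ) := hcon
              have := Finset.card_le_card hsub
              rw [hcard, Nat.card_Ico] at this
              omega
            · have : Thr k q (c.val + 1) = k := by simp [Thr, show q ≤ c.val + 1 by omega]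
              rw [this]
              exact j.isLt
        · rintro ⟨hl, hr⟩
          have hFeq : F = Finset.Ico 1 (c.val + 1) := by
            ext z
            rw [hF, Finset.mem_filter, Finset.mem_Ico, Finset.mem_Ico]
            constructor
            · rintro ⟨⟨h1, h2⟩, h3⟩
              refine ⟨h1, ?_⟩
              by_contra hge
              push_neg at hge
              have hcq : c.val + 1 < q := by omega
              have hT1 : Thr k q (c.val + 1) = (c.val + 1) * k / q := by
                simp [Thr, Nat.not_le.mpr hcq]
              have : (c.val + 1) * k / q ≤ z * k / q :=
                Nat.div_le_div_right (Nat.mul_le_mul_right k hge)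
              omega
            · rintro ⟨h1, h2⟩
              refine ⟨⟨h1, by omega⟩, ?_⟩
              calc z * k / q ≤ c.val * k / q :=
                Nat.div_le_div_right (Nat.mul_le_mul_right k (by omega))
              _ ≤ (j : ℕ) := by rw [← hTc]; exact hl
          rw [hFeq, Nat.card_Ico]
          omega
      calc (Finset.univ.filter fun j : Fin k =>
              splitFun n q hq1 B (e j : Fin n) = c).card
          = (Finset.univ.filter fun j : Fin k =>
              Thr k q c.val ≤ (j:ℕ) ∧ (j:ℕ) < Thr k q (c.val + 1)).card := by
            apply Finset.card_nbij id (by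
              intro j hj
              simp only [Finset.mem_coe, Finset.mem_filter, id] at hj ⊢
              exact ⟨hj.1, (hiff j).mp hj.2⟩)
              (Set.injOn_id _)
              (by
                intro j hj
                simp only [Finset.coe_filter, Set.mem_setOf_eq, Set.mem_image] at hj ⊢
                exact ⟨j, ⟨Finset.mem_univ _, (hiff j).mpr hj.2⟩, rfl⟩)
        _ = Thr k q (c.val + 1) - Thr k q c.val :=
            card_filter_fin_interval k _ _ (Thr_le_of_lt k q hq1 (by omega))
    intro z z'
    rw [hcount z, hcount z']
    obtain ⟨h1, h2, h3, h4⟩ := Thr_bounds k q hq1 z.val z.isLt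
    obtain ⟨h1', h2', h3', h4'⟩ := Thr_bounds k q hq1 z'.val z'.isLt
    omega
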